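/- Let (X, 𝒜, 𝒩) be the coproduct of a family ⟨(X_i, 𝒜_i, 𝒩_i)⟩_{i∈I} of saturated ccc MSNs, let (Y, ℬ) be a nonempty measurable space, let ℰ ⊆ 𝒜 be an 𝒩-generating collection, and let ⟨f_E⟩_{E∈ℰ} be a compatible family subordinated to ℰ. Then this family admits a gluing f : X → Y, and any two gluings coincide outside a set of 𝒩. -/

import Mathlib

open Set MeasureTheory ENNReal

namespace MSNPaper

variable {X Y : Type*}

/-- `A` is a σ-algebra of subsets of the carrier set `Z`. -/
def IsSigmaAlgebraOn (Z : Set X) (A : Set (Set X)) : Prop :=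
  (∀ s ∈ A, s ⊆ Z) ∧ ∅ ∈ A ∧ (∀ s ∈ A, Z \ s ∈ A) ∧
    ∀ f : ℕ → Set X, (∀ n, f n ∈ A) → (⋃ n, f n) ∈ A

/-- `N` is a σ-ideal of the σ-algebra `A`. -/
def IsSigmaIdeal (A N : Set (Set X)) : Prop :=
  N ⊆ A ∧ ∅ ∈ N ∧ (∀ s ∈ A, ∀ t ∈ N, s ⊆ t → s ∈ N) ∧
    ∀ f : ℕ → Set X, (∀ n, f n ∈ N) → (⋃ n, f n) ∈ N

/-- A measurable space with negligibles (MSN) on the carrier set `Z`. -/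
def IsMSN (Z : Set X) (A N : Set (Set X)) : Prop :=
  IsSigmaAlgebraOn Z A ∧ IsSigmaIdeal A N

/-- The MSN is saturated: every subset of a negligible set is negligible. -/
def Saturated (N : Set (Set X)) : Prop :=
  ∀ s t : Set X, s ⊆ t → t ∈ N → s ∈ N

/-- `U` is an `N`-essential upper bound of the collection `E`. -/
def IsEssUB (N E : Set (Set X)) (U : Set X) : Prop :=
  ∀ e ∈ E, e \ U ∈ N

/-- `S` is an `N`-essential supremum of the collection `E ⊆ A`. -/
def IsEssSup (A N E : Set (Set X)) (S : Set X) : Prop :=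
  S ∈ A ∧ IsEssUB N E S ∧ ∀ U ∈ A, IsEssUB N E U → S \ U ∈ N

/-- Every collection of measurable sets admits an essential supremum. -/
def Localizable (A N : Set (Set X)) : Prop :=
  ∀ E ⊆ A, ∃ S, IsEssSup A N E S

/-- The members of `E` pairwise intersect negligibly. -/
def AlmostDisjointed (N E : Set (Set X)) : Prop :=
  E.Pairwise fun e e' => e ∩ e' ∈ N

/-- Countable chain condition: almost disjointed families of non-negligible
measurable sets are countable. -/
def CCC (A N : Set (Set X)) : Prop :=
  ∀ E : Set (Set X), E ⊆ A → (∀ e ∈ E, e ∉ N) → AlmostDisjointed N E → E.Countable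

/-- Local determination for an MSN with carrier `Z`. -/
def LocallyDetermined (Z : Set X) (A N : Set (Set X)) : Prop :=
  ∀ E ⊆ A, IsEssSup A N E Z → ∀ s ⊆ Z, (∀ e ∈ E, s ∩ e ∈ A) → s ∈ A

/-- Trace of a collection of sets on a subset `Z`. -/
def Sub (A : Set (Set X)) (Z : Set X) : Set (Set X) := (· ∩ Z) '' A


/-- The coproduct σ-algebra / σ-ideal on the disjoint union of a family of MSNs:
a set is measurable (negligible) iff its trace on each summand is. -/
def coProd {I : Type*} {Xf : I → Type*} (A : ∀ i, Set (Set (Xf i))) :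
    Set (Set ((i : I) × Xf i)) :=
  {s | ∀ i, Sigma.mk i ⁻¹' s ∈ A i}

/-- A family of partially defined maps `g e : e → Y` (each represented by a total map
whose behaviour matters only on `e`), each measurable from the trace σ-algebra on `e`
to `B`. -/
def Subordinate {X Y : Type*} (A : Set (Set X)) (B : Set (Set Y)) (E : Set (Set X))
    (g : Set X → X → Y) : Prop :=
  ∀ e ∈ E, ∀ b ∈ B, e ∩ g e ⁻¹' b ∈ Sub A e

/-- The family is compatible: any two of its members coincide almost everywhere
on the intersection of their domains. -/
def Compatible {X Y : Type*} (N : Set (Set X)) (E : Set (Set X))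
    (g : Set X → X → Y) : Prop :=
  ∀ e ∈ E, ∀ e' ∈ E, e ∩ e' ∩ {x | g e x ≠ g e' x} ∈ N

/-- `f` is a gluing of the family `g` subordinated to `E`: it is `(A, B)`-measurable and
coincides with `g e` almost everywhere on `e`, for each `e ∈ E`. -/
def IsGluing {X Y : Type*} (A N : Set (Set X)) (B : Set (Set Y)) (E : Set (Set X))
    (g : Set X → X → Y) (f : X → Y) : Prop :=
  (∀ b ∈ B, f ⁻¹' b ∈ A) ∧ ∀ e ∈ E, e ∩ {x | f x ≠ g e x} ∈ N


section Aux

/-- Auxiliary: the measurable-space structure arising from a σ-algebra on `univ`. -/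
def msOf {X : Type*} {A : Set (Set X)} (hA : IsSigmaAlgebraOn Set.univ A) :
    MeasurableSpace X where
  MeasurableSet' s := s ∈ A
  measurableSet_empty := hA.2.1
  measurableSet_compl s hs := by
    have := hA.2.2.1 s hs
    rwa [← Set.compl_eq_univ_diff] at this
  measurableSet_iUnion := hA.2.2.2

lemma msOf_eq {X : Type*} {A : Set (Set X)} (hA : IsSigmaAlgebraOn Set.univ A)
    {s : Set X} : MeasurableSet[msOf hA] s ↔ s ∈ A := Iff.rfl

lemma union_mem_ideal {X : Type*} {A N : Set (Set X)} (hN : IsSigmaIdeal A N)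
    {s t : Set X} (hs : s ∈ N) (ht : t ∈ N) : s ∪ t ∈ N := by
  have h := hN.2.2.2 (fun n => if n = 0 then s else t)
    (by intro n; by_cases h : n = 0 <;> simp [h, hs, ht])
  have he : (⋃ n, if n = 0 then s else t) = s ∪ t := by
    ext x
    simp only [Set.mem_iUnion, Set.mem_union]
    constructor
    · rintro ⟨n, hn⟩
      by_cases h : n = 0
      · left; simpa [h] using hn
      · right; simpa [h] using hn
    · rintro (hx | hx)
      · exact ⟨0, by simpa using hx⟩
      · exact ⟨1, by simpa using hx⟩
  rwa [he] at h

lemma exists_countable_cover {X : Type*} {A N : Set (Set X)}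
    (hA : IsSigmaAlgebraOn Set.univ A) (hN : IsSigmaIdeal A N) (hccc : CCC A N)
    (F : Set (Set X)) (hFA : F ⊆ A) (hFne : F.Nonempty)
    (hsup : ∀ U ∈ A, IsEssUB N F U → Set.univ \ U ∈ N) :
    ∃ D : ℕ → Set X, (∀ n, D n ∈ A) ∧ (∀ n, ∃ e ∈ F, D n ⊆ e) ∧
      (Set.univ \ ⋃ n, D n) ∈ N := by
  classical
  letI m : MeasurableSpace X := msOf hA
  set 𝒟 : Set (Set X) := {d : Set X | d ∈ A ∧ d ∉ N ∧ ∃ e ∈ F, d ⊆ e} with h𝒟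
  have hchainH : ∀ c ⊆ {M : Set (Set X) | M ⊆ 𝒟 ∧ M.Pairwise (Disjoint · ·)},
      IsChain (· ⊆ ·) c → ∃ ub ∈ {M : Set (Set X) | M ⊆ 𝒟 ∧ M.Pairwise (Disjoint · ·)},
        ∀ s ∈ c, s ⊆ ub := by
    intro c hc hchain
    refine ⟨⋃₀ c, ⟨?_, ?_⟩, fun s hs => subset_sUnion_of_mem hs⟩
    · rintro d ⟨cs, hcs, hd⟩
      exact (hc hcs).1 hd
    · intro d hd d' hd' hne
      obtain ⟨c1, hc1, hd1⟩ := hd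
      obtain ⟨c2, hc2, hd2⟩ := hd'
      rcases eq_or_ne c1 c2 with rfl | hcc
      · exact (hc hc1).2 hd1 hd2 hne
      · rcases hchain hc1 hc2 hcc with hle | hle
        · exact (hc hc2).2 (hle hd1) hd2 hne
        · exact (hc hc1).2 hd1 (hle hd2) hne
  obtain ⟨M, hM⟩ := zorn_subset
      {M : Set (Set X) | M ⊆ 𝒟 ∧ M.Pairwise (Disjoint · ·)} hchainH
  have hMsub : M ⊆ 𝒟 := hM.1.1
  have hMcount : M.Countable := by
    refine hccc M (fun d hd => (hMsub hd).1) (fun d hd => (hMsub hd).2.1) ?_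
    intro d hd d' hd' hne
    rw [Set.disjoint_iff_inter_eq_empty.1 (hM.1.2 hd hd' hne)]
    exact hN.2.1
  have hSA : ⋃₀ M ∈ A :=
    (MeasurableSet.sUnion hMcount (fun t ht => (hMsub ht).1) : MeasurableSet[m] _)
  have hub : IsEssUB N F (⋃₀ M) := by
    intro e he
    by_contra hcontra
    have heA : MeasurableSet[m] e := hFA he
    have hSA' : MeasurableSet[m] (⋃₀ M) := hSA
    have hdA : e \ ⋃₀ M ∈ A := heA.diff hSA'
    have hd𝒟 : e \ ⋃₀ M ∈ 𝒟 := ⟨hdA, hcontra, e, he, Set.diff_subset⟩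
    have hins : insert (e \ ⋃₀ M) M ∈
        {M : Set (Set X) | M ⊆ 𝒟 ∧ M.Pairwise (Disjoint · ·)} := by
      refine ⟨Set.insert_subset hd𝒟 hMsub, ?_⟩
      refine (Set.pairwise_insert_of_symmetric (r := (Disjoint · ·))).2 ⟨hM.1.2, ?_⟩
      intro b hb _
      exact Disjoint.mono_right (Set.subset_sUnion_of_mem hb) disjoint_sdiff_left
    have hmem : e \ ⋃₀ M ∈ M := hM.2 hins (Set.subset_insert _ _) (Set.mem_insert _ _)
    have hbot : e \ ⋃₀ M = ∅ :=
      Disjoint.eq_bot_of_le disjoint_sdiff_left (Set.subset_sUnion_of_mem hmem)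
    exact hcontra (hbot ▸ hN.2.1)
  have hrem := hsup _ hSA hub
  rcases M.eq_empty_or_nonempty with hMe | hMne
  · obtain ⟨e₀, he₀⟩ := hFne
    refine ⟨fun _ => ∅, fun _ => hA.2.1, fun _ => ⟨e₀, he₀, Set.empty_subset _⟩, ?_⟩
    simpa [hMe] using hrem
  · obtain ⟨r, hr⟩ := Set.Countable.exists_eq_range hMcount hMne
    have hrM : ∀ n, r n ∈ M := fun n => by rw [hr]; exact Set.mem_range_self n
    refine ⟨r, fun n => (hMsub (hrM n)).1, fun n => (hMsub (hrM n)).2.2, ?_⟩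
    have : ⋃ n, r n = ⋃₀ M := by rw [hr, Set.sUnion_range]
    rwa [this]

end Aux

/-- On a coproduct of saturated ccc MSNs, every compatible family subordinated to a
generating collection admits a gluing, unique up to equality almost everywhere,
with no restriction on the target measurable space. -/
theorem gluing_cccc {I : Type*} {Xf : I → Type*} {Y : Type*}
    (A N : ∀ i, Set (Set (Xf i)))
    (hMSN : ∀ i, IsMSN Set.univ (A i) (N i))
    (hsat : ∀ i, Saturated (N i)) (hccc : ∀ i, CCC (A i) (N i))
    (B : Set (Set Y)) (hB : IsSigmaAlgebraOn Set.univ B) [Nonempty Y]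
    (E : Set (Set ((i : I) × Xf i))) (hEA : E ⊆ coProd A)
    (hgen : IsEssSup (coProd A) (coProd N) E Set.univ)
    (g : Set ((i : I) × Xf i) → (i : I) × Xf i → Y)
    (hsub : Subordinate (coProd A) B E g) (hcomp : Compatible (coProd N) E g) :
    (∃ f, IsGluing (coProd A) (coProd N) B E g f) ∧
      ∀ f f', IsGluing (coProd A) (coProd N) B E g f →
        IsGluing (coProd A) (coProd N) B E g f' →
        {x | f x ≠ f' x} ∈ coProd N := by
  classical
  obtain ⟨y₀⟩ := (inferInstance : Nonempty Y)
  have hNempty : ∀ i, ∅ ∈ N i := fun i => (hMSN i).2.2.1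
  have hNiUnion : ∀ (i) (h : ℕ → Set (Xf i)), (∀ n, h n ∈ N i) → (⋃ n, h n) ∈ N i :=
    fun i => (hMSN i).2.2.2.2
  have hAuniv : ∀ i, Set.univ ∈ A i := fun i => by
    have h := hgen.1 i
    rwa [Set.preimage_univ] at h
  rcases E.eq_empty_or_nonempty with hEe | hEne
  · -- degenerate case : E is empty
    have hemptyA : (∅ : Set ((i : I) × Xf i)) ∈ coProd A := fun i => by
      rw [Set.preimage_empty]; exact (hMSN i).1.2.1
    have huniv : (Set.univ : Set ((i : I) × Xf i)) ∈ coProd N := by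
      have h := hgen.2.2 ∅ hemptyA
        (by intro e he; rw [hEe] at he; exact absurd he (Set.notMem_empty e))
      simpa using h
    have hallN : ∀ s : Set ((i : I) × Xf i), s ∈ coProd N := fun s i =>
      hsat i _ _ (Set.subset_univ _) (huniv i)
    refine ⟨⟨fun _ => y₀, ?_, fun e _ => hallN _⟩, fun f f' _ _ => hallN _⟩
    intro b hb
    by_cases hy : y₀ ∈ b
    · have h : (fun _ : (i : I) × Xf i => y₀) ⁻¹' b = Set.univ := by ext x; simp [hy]
      rw [h]; intro i; rw [Set.preimage_univ]; exact hAuniv i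
    · have h : (fun _ : (i : I) × Xf i => y₀) ⁻¹' b = ∅ := by ext x; simp [hy]
      rw [h]; exact hemptyA
  · -- main case
    have key : ∀ i, ∃ (D : ℕ → Set (Xf i)) (ee : ℕ → Set ((i : I) × Xf i)),
        (∀ n, D n ∈ A i) ∧ (∀ n, ee n ∈ E) ∧
        (∀ n, D n ⊆ Sigma.mk i ⁻¹' ee n) ∧ (Set.univ \ ⋃ n, D n) ∈ N i := by
      intro i
      set F : Set (Set (Xf i)) := (fun e => Sigma.mk i ⁻¹' e) '' E with hF
      have hFA : F ⊆ A i := by rintro _ ⟨e, he, rfl⟩; exact hEA he i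
      have hFne : F.Nonempty := hEne.image _
      have hsup : ∀ U ∈ A i, IsEssUB (N i) F U → Set.univ \ U ∈ N i := by
        intro U hU hub
        set U' : Set ((j : I) × Xf j) := Set.univ \ (Sigma.mk i '' (Set.univ \ U))
          with hU'def
        have hprej : ∀ (j) (_ : j ≠ i) (T : Set (Xf i)),
            Sigma.mk j ⁻¹' (Sigma.mk i '' T) = ∅ := by
          intro j hj T
          ext x
          simp only [Set.mem_preimage, Set.mem_image, Set.mem_empty_iff_false, iff_false]
          rintro ⟨t, -, heq⟩
          exact hj (congrArg Sigma.fst heq).symm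
        have hprei : ∀ T : Set (Xf i), Sigma.mk i ⁻¹' (Sigma.mk i '' T) = T :=
          fun T => Set.preimage_image_eq T sigma_mk_injective
        have hU'j : ∀ j, j ≠ i → Sigma.mk j ⁻¹' U' = Set.univ := by
          intro j hj
          rw [hU'def, Set.preimage_diff, Set.preimage_univ, hprej j hj, Set.diff_empty]
        have hU'i : Sigma.mk i ⁻¹' U' = U := by
          rw [hU'def, Set.preimage_diff, Set.preimage_univ, hprei,
            Set.diff_diff_cancel_left (Set.subset_univ U)]
        have hU'A : U' ∈ coProd A := by
          intro j
          rcases eq_or_ne j i with rfl | hj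
          · rw [hU'i]; exact hU
          · rw [hU'j j hj]; exact hAuniv j
        have hub' : IsEssUB (coProd N) E U' := by
          intro e he j
          rcases eq_or_ne j i with rfl | hj
          · rw [Set.preimage_diff, hU'i]
            exact hub _ ⟨e, he, rfl⟩
          · rw [Set.preimage_diff, hU'j j hj, Set.diff_univ]
            exact hNempty j
        have h := hgen.2.2 U' hU'A hub' i
        rwa [Set.preimage_diff, Set.preimage_univ, hU'i] at h
      obtain ⟨D, hDA, hDe, hrem⟩ :=
        exists_countable_cover (hMSN i).1 (hMSN i).2 (hccc i) F hFA hFne hsup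
      have hDe' : ∀ n, ∃ e ∈ E, D n ⊆ Sigma.mk i ⁻¹' e := by
        intro n
        obtain ⟨s, ⟨e, he, rfl⟩, hss⟩ := hDe n
        exact ⟨e, he, hss⟩
      choose ee hee1 hee2 using hDe'
      exact ⟨D, ee, hDA, hee1, hee2, hrem⟩
    choose D ee hDA heeE hDsub hrem using key
    set f : ((i : I) × Xf i) → Y := fun p =>
      if h : ∃ n, p.2 ∈ D p.1 n then g (ee p.1 (Nat.find h)) p else y₀ with hfdef
    have hfpos : ∀ (i) (x : Xf i) (h : ∃ n, x ∈ D i n),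
        f ⟨i, x⟩ = g (ee i (Nat.find h)) ⟨i, x⟩ := by
      intro i x h
      rw [hfdef]
      exact dif_pos h
    have hfneg : ∀ (i) (x : Xf i), ¬(∃ n, x ∈ D i n) → f ⟨i, x⟩ = y₀ := by
      intro i x h
      rw [hfdef]
      exact dif_neg h
    have hmeas : ∀ b ∈ B, f ⁻¹' b ∈ coProd A := by
      intro b hb i
      letI m : MeasurableSpace (Xf i) := msOf (hMSN i).1
      set T : ℕ → Set (Xf i) := fun n =>
        Sigma.mk i ⁻¹' (ee i n ∩ g (ee i n) ⁻¹' b) with hT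
      have hTA : ∀ n, T n ∈ A i := by
        intro n
        obtain ⟨a, ha, haeq⟩ := hsub (ee i n) (heeE i n) b hb
        have heq : T n = Sigma.mk i ⁻¹' (a ∩ ee i n) := by
          rw [hT]
          simp only
          rw [← haeq]
        rw [heq, Set.preimage_inter]
        have h1 : MeasurableSet[m] (Sigma.mk i ⁻¹' a) := ha i
        have h2 : MeasurableSet[m] (Sigma.mk i ⁻¹' (ee i n)) := hEA (heeE i n) i
        exact h1.inter h2
      have hDm : ∀ n, MeasurableSet[m] (D i n) := fun n => hDA i n
      have hkey : Sigma.mk i ⁻¹' (f ⁻¹' b) =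
          (⋃ n, ((D i n \ ⋃ m', ⋃ (_ : m' < n), D i m') ∩ T n)) ∪
            ((Set.univ \ ⋃ n, D i n) ∩ {x : Xf i | y₀ ∈ b}) := by
        ext x
        simp only [Set.mem_preimage, Set.mem_union, Set.mem_iUnion, Set.mem_inter_iff,
          Set.mem_diff, Set.mem_univ, true_and, Set.mem_setOf_eq, hT, not_exists]
        by_cases h : ∃ n, x ∈ D i n
        · rw [hfpos i x h]
          constructor
          · intro hgb
            refine Or.inl ⟨Nat.find h, ⟨Nat.find_spec h, ?_⟩,
              hDsub i (Nat.find h) (Nat.find_spec h), hgb⟩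
            intro m' hm'
            exact Nat.find_min h hm'
          · rintro (⟨n, ⟨hxn, hnmin⟩, -, hxT⟩ | ⟨hnot, -⟩)
            · have hn : Nat.find h = n := by
                have h1 : Nat.find h ≤ n := Nat.find_min' h hxn
                rcases h1.lt_or_eq with hlt | heq
                · exact absurd (Nat.find_spec h) (hnmin _ hlt)
                · exact heq
              rw [hn]
              exact hxT
            · obtain ⟨n, hn⟩ := h
              exact absurd hn (hnot n)
        · rw [hfneg i x h]
          push_neg at h
          constructor
          · intro hy
            exact Or.inr ⟨h, hy⟩
          · rintro (⟨n, ⟨hxn, -⟩, -⟩ | ⟨-, hy⟩)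
            · exact absurd hxn (h n)
            · exact hy
      have hres : MeasurableSet[m]
          ((⋃ n, ((D i n \ ⋃ m', ⋃ (_ : m' < n), D i m') ∩ T n)) ∪
            ((Set.univ \ ⋃ n, D i n) ∩ {x : Xf i | y₀ ∈ b})) := by
        refine MeasurableSet.union ?_ ?_
        · refine MeasurableSet.iUnion fun n => ?_
          refine ((hDm n).diff ?_).inter (hTA n)
          exact MeasurableSet.iUnion fun m' => MeasurableSet.iUnion fun _ => hDm m'
        · refine (MeasurableSet.univ.diff (MeasurableSet.iUnion hDm)).inter ?_
          by_cases hy : y₀ ∈ b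
          · have h : {x : Xf i | y₀ ∈ b} = Set.univ := by ext z; simp [hy]
            rw [h]; exact MeasurableSet.univ
          · have h : {x : Xf i | y₀ ∈ b} = ∅ := by ext z; simp [hy]
            rw [h]; exact MeasurableSet.empty
      rw [hkey]
      exact hres
    have hglue : ∀ e ∈ E, e ∩ {x | f x ≠ g e x} ∈ coProd N := by
      intro e he i
      set V : ℕ → Set (Xf i) := fun n =>
        Sigma.mk i ⁻¹' (ee i n ∩ e ∩ {p | g (ee i n) p ≠ g e p}) with hV
      have hVN : ∀ n, V n ∈ N i := fun n => hcomp (ee i n) (heeE i n) e he i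
      refine hsat i _ ((Set.univ \ ⋃ n, D i n) ∪ ⋃ n, V n) ?_
        (union_mem_ideal (hMSN i).2 (hrem i) (hNiUnion i V hVN))
      intro x hx
      obtain ⟨hxe, hxne⟩ := hx
      by_cases h : ∃ n, x ∈ D i n
      · refine Or.inr (Set.mem_iUnion.2 ⟨Nat.find h, ?_⟩)
        refine ⟨⟨hDsub i _ (Nat.find_spec h), hxe⟩, ?_⟩
        have hxne' : f ⟨i, x⟩ ≠ g e ⟨i, x⟩ := hxne
        rw [hfpos i x h] at hxne'
        exact hxne'
      · exact Or.inl ⟨Set.mem_univ x, fun hmem => h (Set.mem_iUnion.1 hmem)⟩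
    refine ⟨⟨f, hmeas, hglue⟩, ?_⟩
    intro f₁ f₂ h₁ h₂ i
    set W : ℕ → Set (Xf i) := fun n =>
      Sigma.mk i ⁻¹' (ee i n ∩ {p | f₁ p ≠ g (ee i n) p}) ∪
        Sigma.mk i ⁻¹' (ee i n ∩ {p | f₂ p ≠ g (ee i n) p}) with hW
    have hWN : ∀ n, W n ∈ N i := fun n =>
      union_mem_ideal (hMSN i).2 (h₁.2 (ee i n) (heeE i n) i) (h₂.2 (ee i n) (heeE i n) i)
    refine hsat i _ ((Set.univ \ ⋃ n, D i n) ∪ ⋃ n, W n) ?_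
      (union_mem_ideal (hMSN i).2 (hrem i) (hNiUnion i W hWN))
    intro x hx
    by_cases h : ∃ n, x ∈ D i n
    · obtain ⟨n, hn⟩ := h
      refine Or.inr (Set.mem_iUnion.2 ⟨n, ?_⟩)
      have hxe : (⟨i, x⟩ : (i : I) × Xf i) ∈ ee i n := hDsub i n hn
      by_cases h1 : f₁ ⟨i, x⟩ = g (ee i n) ⟨i, x⟩
      · refine Or.inr ⟨hxe, ?_⟩
        intro h2
        exact hx (h1.trans h2.symm)
      · exact Or.inl ⟨hxe, h1⟩
    · exact Or.inl ⟨Set.mem_univ x, fun hmem => h (Set.mem_iUnion.1 hmem)⟩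


end MSNPaper
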